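/- Let X be a path-connected metric space and p ∈ X with π₁(X,p) totally path disconnected, let E be the quotient of the path space S_p(X) = {continuous f : [0,1] → X with f(0) = p} (with the uniform topology) by path homotopy rel endpoints, and Q : E → X the endpoint map Q([f]) = f(1). Then E is simply connected: E is path connected and every loop in E based at the class [P] of the constant path at p is null-homotopic. -/

import Mathlib

open Set Topology unitInterval

noncomputable section

/-- The loop space `C_p(X)`: continuous maps `f : [0,1] → X` with `f 0 = f 1 = p`,
with the topology of uniform convergence (the compact-open topology on `C(I,X)`,
which agrees with uniform convergence for metric `X`). -/
def LoopSp (X : Type) [TopologicalSpace X] (p : X) : Type :=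
  {f : C(unitInterval, X) // f 0 = p ∧ f 1 = p}

instance (X : Type) [TopologicalSpace X] (p : X) : TopologicalSpace (LoopSp X p) :=
  inferInstanceAs (TopologicalSpace {f : C(unitInterval, X) // f 0 = p ∧ f 1 = p})

/-- The topological fundamental group `π₁(X,p)`: the set of path components of the
loop space `C_p(X)`, with the quotient topology. -/
def TopPi1 (X : Type) [TopologicalSpace X] (p : X) : Type :=
  @Quotient (LoopSp X p) (pathSetoid _)

instance (X : Type) [TopologicalSpace X] (p : X) : TopologicalSpace (TopPi1 X p) :=
  inferInstanceAs (TopologicalSpace (@Quotient (LoopSp X p) (pathSetoid _)))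

/-- The class in `π₁(X,p)` of a loop. -/
def TopPi1.mk {X : Type} [TopologicalSpace X] {p : X} (f : LoopSp X p) : TopPi1 X p :=
  @Quotient.mk _ (pathSetoid _) f

/-- A continuous map sending `p` to `q` induces a map on loops. -/
def LoopSp.map {X Y : Type} [TopologicalSpace X] [TopologicalSpace Y] {p : X} {q : Y}
    (f : C(X, Y)) (hf : f p = q) : LoopSp X p → LoopSp Y q :=
  fun α => ⟨f.comp α.1, by simp [α.2.1, α.2.2, hf]⟩

lemma LoopSp.continuous_map {X Y : Type} [TopologicalSpace X] [TopologicalSpace Y]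
    {p : X} {q : Y} (f : C(X, Y)) (hf : f p = q) :
    Continuous (LoopSp.map f hf) :=
  Continuous.subtype_mk ((ContinuousMap.continuous_postcomp f).comp continuous_subtype_val) _

/-- The homomorphism `f_* : π₁(X,p) → π₁(Y,q)` induced by a continuous map `f` with
`f p = q`, namely `f_*[α] = [f ∘ α]`. -/
def TopPi1.map {X Y : Type} [TopologicalSpace X] [TopologicalSpace Y] {p : X} {q : Y}
    (f : C(X, Y)) (hf : f p = q) : TopPi1 X p → TopPi1 Y q :=
  @Quotient.map _ _ (pathSetoid _) (pathSetoid _) (LoopSp.map f hf)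
    (fun _ _ h => ⟨h.somePath.map (LoopSp.continuous_map f hf)⟩)

/-- A space is totally path disconnected if each of its path components is a single point. -/
def IsTotallyPathDisconnected (Y : Type) [TopologicalSpace Y] : Prop :=
  ∀ x y : Y, Joined x y → x = y

/-- A continuous surjection is a (Hurewicz) fibration if it has the homotopy lifting
property with respect to all spaces. -/
def IsFibration {E B : Type} [TopologicalSpace E] [TopologicalSpace B] (q : E → B) : Prop :=
  Function.Surjective q ∧ Continuous q ∧
    ∀ (Y : Type) [TopologicalSpace Y] (f : Y → E) (F : Y × unitInterval → B),
      Continuous f → Continuous F → (∀ y, F (y, 0) = q (f y)) →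
      ∃ G : Y × unitInterval → E, Continuous G ∧ (∀ z, q (G z) = F z) ∧
        ∀ y, G (y, 0) = f y

end

/-- The path space `S_p(X)`: continuous maps `f : [0,1] → X` with `f 0 = p`, with the
topology of uniform convergence. -/
def PathSp (X : Type) [TopologicalSpace X] (p : X) : Type :=
  {f : C(unitInterval, X) // f 0 = p}

instance (X : Type) [TopologicalSpace X] (p : X) : TopologicalSpace (PathSp X p) :=
  inferInstanceAs (TopologicalSpace {f : C(unitInterval, X) // f 0 = p})

/-- The equivalence relation of path homotopy (homotopy rel endpoints) on `S_p(X)`. -/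
def pathHomSetoid (X : Type) [TopologicalSpace X] (p : X) : Setoid (PathSp X p) where
  r f g := ContinuousMap.HomotopicRel f.1 g.1 {0, 1}
  iseqv := ⟨fun f => ContinuousMap.HomotopicRel.refl f.1, fun h => h.symm,
    fun h h' => h.trans h'⟩

/-- `E`: the quotient of the path space `S_p(X)` by path homotopy rel endpoints, with
the quotient topology. -/
def PathClasses (X : Type) [TopologicalSpace X] (p : X) : Type :=
  Quotient (pathHomSetoid X p)

instance (X : Type) [TopologicalSpace X] (p : X) : TopologicalSpace (PathClasses X p) :=
  inferInstanceAs (TopologicalSpace (Quotient (pathHomSetoid X p)))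

/-- The endpoint map `Q : E → X`, `Q([f]) = f(1)`. -/
def endMap (X : Type) [TopologicalSpace X] (p : X) : PathClasses X p → X :=
  Quotient.lift (fun f : PathSp X p => f.1 1)
    (fun _ _ h => h.some.fst_eq_snd (by simp : (1 : unitInterval) ∈ ({0, 1} : Set unitInterval)))

/-! ### Auxiliary material for `stmt11` -/

noncomputable section Stmt11Aux

open ContinuousMap

section QuotGen
variable {A B Y : Type*} [TopologicalSpace A] [TopologicalSpace B] [TopologicalSpace Y]

theorem myIsQuotientMap_prodMap_id [LocallyCompactSpace Y] {f : A → B} (hf : IsQuotientMap f) :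
    IsQuotientMap (Prod.map f (id : Y → Y)) := by
  simp_rw [isQuotientMap_iff, isCoinducing_iff, and_comm, iff_comm]
  refine ⟨(hf.surjective).prodMap Function.surjective_id, fun s => ?_⟩
  constructor
  · intro hs
    exact hs.preimage ((hf.continuous.comp continuous_fst).prodMk continuous_snd)
  · intro hs
    rw [isOpen_iff_continuous_mem]
    have := isOpen_iff_continuous_mem.mp hs
    exact hf.continuous_lift_prod_left this

theorem myIsQuotientMap_restrictPreimage_isClosed {f : A → B} (hf : IsQuotientMap f)
    {C : Set B} (hC : IsClosed C) : IsQuotientMap (C.restrictPreimage f) := by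
  have hsurj : Function.Surjective (C.restrictPreimage f) := by
    rintro ⟨b, hb⟩
    obtain ⟨a, rfl⟩ := hf.surjective b
    exact ⟨⟨a, hb⟩, rfl⟩
  rw [isQuotientMap_iff_isClosed]
  refine ⟨hsurj, fun s => ?_⟩
  constructor
  · intro hs
    exact hs.preimage (Continuous.restrictPreimage hf.continuous)
  · intro hs
    have hCpre : IsClosed (f ⁻¹' C) := hC.preimage hf.continuous
    have hval : IsClosed ((Subtype.val '' ((C.restrictPreimage f) ⁻¹' s)) : Set A) :=
      hCpre.isClosedEmbedding_subtypeVal.isClosedMap _ hs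
    have hT : IsClosed (Subtype.val '' s : Set B) := by
      rw [← hf.isClosed_preimage]
      convert hval using 1
      ext a
      simp only [Set.mem_preimage, Set.mem_image]
      constructor
      · rintro ⟨⟨b, hb⟩, hbs, hba⟩
        refine ⟨⟨a, by simpa [← hba] using hb⟩, ?_, rfl⟩
        · have : (⟨b, hb⟩ : C) = C.restrictPreimage f ⟨a, by simpa [← hba] using hb⟩ :=
            Subtype.ext hba
          rwa [this] at hbs
      · rintro ⟨⟨a', ha'⟩, has, rfl⟩
        exact ⟨C.restrictPreimage f ⟨a', ha'⟩, has, rfl⟩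
    have : s = Subtype.val ⁻¹' (Subtype.val '' s : Set B) := by
      rw [Subtype.val_injective.preimage_image]
    rw [this]
    exact hT.preimage continuous_subtype_val

end QuotGen

section PathOps
variable {X : Type*} [TopologicalSpace X] {Y : Type*} [TopologicalSpace Y]

/-- multiplication on the unit interval as a continuous map. -/
def mulI : C(unitInterval × unitInterval, unitInterval) :=
  ⟨fun q => ⟨q.1.1 * q.2.1, unitInterval.mul_mem q.1.2 q.2.2⟩,
    Continuous.subtype_mk ((continuous_subtype_val.comp continuous_fst).mul
      (continuous_subtype_val.comp continuous_snd)) _⟩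

lemma mulI_zero_right (s : unitInterval) : mulI (s, 0) = 0 := Subtype.ext (mul_zero _)
lemma mulI_one_right (s : unitInterval) : mulI (s, 1) = s := Subtype.ext (mul_one _)
lemma mulI_zero_left (t : unitInterval) : mulI (0, t) = 0 := Subtype.ext (zero_mul _)
lemma mulI_one_left (t : unitInterval) : mulI (1, t) = t := Subtype.ext (one_mul _)

/-- The family of restrictions of `f` to initial segments, as a continuous family. -/
def resF (f : C(unitInterval, X)) : C(unitInterval, C(unitInterval, X)) :=
  ContinuousMap.curry (f.comp mulI)

/-- Restriction of `f` to the initial segment `[0,s]`, reparametrized. -/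
def res (f : C(unitInterval, X)) (s : unitInterval) : C(unitInterval, X) := resF f s

lemma res_apply (f : C(unitInterval, X)) (s t : unitInterval) :
    res f s t = f (mulI (s, t)) := rfl

lemma res_zero (f : C(unitInterval, X)) : res f 0 = ContinuousMap.const _ (f 0) := by
  ext t; rw [res_apply, mulI_zero_left]; rfl

lemma res_one (f : C(unitInterval, X)) : res f 1 = f := by
  ext t; rw [res_apply, mulI_one_left]

lemma res_at_zero (f : C(unitInterval, X)) (s : unitInterval) : res f s 0 = f 0 := by
  rw [res_apply, mulI_zero_right]

lemma res_at_one (f : C(unitInterval, X)) (s : unitInterval) : res f s 1 = f s := by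
  rw [res_apply, mulI_one_right]

/-- Reversal of a path, as an operation on continuous maps. -/
def revCM (f : C(unitInterval, X)) : C(unitInterval, X) :=
  f.comp ⟨unitInterval.symm, unitInterval.continuous_symm⟩

lemma revCM_apply (f : C(unitInterval, X)) (t : unitInterval) :
    revCM f t = f (unitInterval.symm t) := rfl

lemma revCM_at_zero (f : C(unitInterval, X)) : revCM f 0 = f 1 := by
  rw [revCM_apply, unitInterval.symm_zero]

lemma revCM_at_one (f : C(unitInterval, X)) : revCM f 1 = f 0 := by
  rw [revCM_apply, unitInterval.symm_one]

lemma continuous_revCM : Continuous (revCM (X := X)) := ContinuousMap.continuous_precomp _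

/-- View a continuous map as a path. -/
def toP (f : C(unitInterval, X)) {a b : X} (h0 : f 0 = a) (h1 : f 1 = b) : Path a b :=
  { toContinuousMap := f, source' := h0, target' := h1 }

/-- Concatenation of continuous maps with matching endpoints. -/
def transCM (f g : C(unitInterval, X)) (h : f 1 = g 0) : C(unitInterval, X) :=
  ((toP f rfl rfl).trans ((toP g rfl rfl).cast h rfl)).toContinuousMap

lemma transCM_eq_path {a b c : X} (f g : C(unitInterval, X)) (h : f 1 = g 0)
    (F : Path a b) (G : Path b c) (hF : ∀ t, F t = f t) (hG : ∀ t, G t = g t) :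
    transCM f g h = (F.trans G).toContinuousMap := by
  ext t
  show ((toP f rfl rfl).trans ((toP g rfl rfl).cast h rfl)) t = (F.trans G) t
  rw [Path.trans_apply, Path.trans_apply]
  split_ifs
  · exact (hF _).symm
  · exact (hG _).symm

lemma transCM_at_zero (f g : C(unitInterval, X)) (h : f 1 = g 0) :
    transCM f g h 0 = f 0 := Path.source _

lemma transCM_at_one (f g : C(unitInterval, X)) (h : f 1 = g 0) :
    transCM f g h 1 = g 1 := Path.target _

lemma continuous_transCM (u v : Y → C(unitInterval, X)) (hu : Continuous u) (hv : Continuous v)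
    (h : ∀ y, u y 1 = v y 0) : Continuous fun y => transCM (u y) (v y) (h y) := by
  apply ContinuousMap.continuous_of_continuous_uncurry
  have key : (Function.uncurry fun y t => transCM (u y) (v y) (h y) t) =
      fun q : Y × unitInterval =>
        if ((q.2 : ℝ)) ≤ 1 / 2 then u q.1 (Set.projIcc 0 1 zero_le_one (2 * (q.2 : ℝ)))
        else v q.1 (Set.projIcc 0 1 zero_le_one (2 * (q.2 : ℝ) - 1)) := by
    funext q
    show (if ((q.2 : ℝ)) ≤ 1 / 2 then ((toP (u q.1) rfl rfl)).extend (2 * (q.2 : ℝ))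
      else (((toP (v q.1) rfl rfl).cast (h q.1) rfl)).extend (2 * (q.2 : ℝ) - 1)) = _
    split_ifs <;> rfl
  rw [key]
  apply Continuous.if_le
  · have hp : Continuous fun q : Y × unitInterval =>
        Set.projIcc (0:ℝ) 1 zero_le_one (2 * (q.2 : ℝ)) :=
      continuous_projIcc.comp (continuous_const.mul (continuous_subtype_val.comp continuous_snd))
    exact ContinuousEval.continuous_eval.comp ((hu.comp continuous_fst).prodMk hp)
  · have hp : Continuous fun q : Y × unitInterval =>
        Set.projIcc (0:ℝ) 1 zero_le_one (2 * (q.2 : ℝ) - 1) :=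
      continuous_projIcc.comp ((continuous_const.mul
        (continuous_subtype_val.comp continuous_snd)).sub continuous_const)
    exact ContinuousEval.continuous_eval.comp ((hv.comp continuous_fst).prodMk hp)
  · exact continuous_subtype_val.comp continuous_snd
  · exact continuous_const
  · intro q hq
    have h1 : Set.projIcc (0:ℝ) 1 zero_le_one (2 * (q.2 : ℝ)) = 1 := by
      rw [hq]; norm_num [Set.projIcc]
    have h2 : Set.projIcc (0:ℝ) 1 zero_le_one (2 * (q.2 : ℝ) - 1) = 0 := by
      rw [hq]; norm_num [Set.projIcc]
    rw [h1, h2, h q.1]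

/-- Cancellation: if `F · A⁻¹` is null homotopic then `F` is homotopic to `A`. -/
lemma homotopic_of_trans_symm_nil {a b : X} (F A : Path a b)
    (h : (F.trans A.symm).Homotopic (Path.refl a)) : F.Homotopic A := by
  have h1 : F.Homotopic (F.trans (Path.refl b)) := ⟨(Path.Homotopy.transRefl F).symm⟩
  have h2 : (F.trans (Path.refl b)).Homotopic (F.trans (A.symm.trans A)) :=
    Path.Homotopic.hcomp (Path.Homotopic.refl F) ⟨Path.Homotopy.reflSymmTrans A⟩
  have h3 : (F.trans (A.symm.trans A)).Homotopic ((F.trans A.symm).trans A) :=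
    ⟨(Path.Homotopy.transAssoc F A.symm A).symm⟩
  have h4 : ((F.trans A.symm).trans A).Homotopic ((Path.refl a).trans A) :=
    Path.Homotopic.hcomp h (Path.Homotopic.refl A)
  have h5 : ((Path.refl a).trans A).Homotopic A := ⟨Path.Homotopy.reflTrans A⟩
  exact (((h1.trans h2).trans h3).trans h4).trans h5

end PathOps

section Bridges
variable {X : Type} [TopologicalSpace X] {p : X}

/-- The constant path at `p` as an element of the path space. -/
def cstP (p : X) : PathSp X p := ⟨ContinuousMap.const _ p, rfl⟩

/-- The quotient map onto `E`. -/
def pcMk : PathSp X p → PathClasses X p := Quotient.mk (pathHomSetoid X p)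

lemma isQuotientMap_pcMk : IsQuotientMap (pcMk (X := X) (p := p)) :=
  isQuotientMap_quotient_mk' (s := pathHomSetoid X p)

lemma continuous_pcMk : Continuous (pcMk (X := X) (p := p)) :=
  isQuotientMap_pcMk.continuous

lemma pcMk_eq_iff {f g : PathSp X p} :
    pcMk f = pcMk g ↔ ContinuousMap.HomotopicRel f.1 g.1 {0, 1} :=
  ⟨fun h => Quotient.exact h, fun h => Quotient.sound h⟩

lemma endMap_mk (f : PathSp X p) : endMap X p (pcMk f) = f.1 1 := rfl

lemma continuous_endMap : Continuous (endMap X p) :=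
  Continuous.quotient_lift
    ((ContinuousEvalConst.continuous_eval_const (1 : unitInterval)).comp continuous_subtype_val) _

lemma continuous_pi1Mk : Continuous (TopPi1.mk (X := X) (p := p)) :=
  continuous_quotient_mk' (s := pathSetoid _)

lemma pi1Mk_eq_iff {ℓ ℓ' : LoopSp X p} : TopPi1.mk ℓ = TopPi1.mk ℓ' ↔ Joined ℓ ℓ' :=
  ⟨fun h => Quotient.exact h, fun h => Quotient.sound h⟩

/-- Two loops are joined in the loop space iff they are homotopic rel `{0,1}`. -/
lemma joined_iff_homotopicRel {ℓ ℓ' : LoopSp X p} :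
    Joined ℓ ℓ' ↔ ContinuousMap.HomotopicRel ℓ.1 ℓ'.1 {0, 1} := by
  constructor
  · rintro ⟨γ⟩
    have hcont : Continuous fun q : unitInterval × unitInterval =>
        ((γ q.1).1 : C(unitInterval, X)) q.2 :=
      ContinuousEval.continuous_eval.comp
        ((continuous_subtype_val.comp (γ.continuous.comp continuous_fst)).prodMk continuous_snd)
    refine ⟨{ toFun := fun q => (γ q.1).1 q.2
              continuous_toFun := hcont
              map_zero_left := fun t => by show (γ 0).1 t = ℓ.1 t; rw [γ.source]
              map_one_left := fun t => by show (γ 1).1 t = ℓ'.1 t; rw [γ.target]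
              prop' := ?_ }⟩
    intro u x hx
    rcases hx with rfl | hx
    · show (γ u).1 0 = ℓ.1 0
      rw [(γ u).2.1, ℓ.2.1]
    · rw [Set.mem_singleton_iff] at hx
      subst hx
      show (γ u).1 1 = ℓ.1 1
      rw [(γ u).2.2, ℓ.2.2]
  · rintro ⟨H⟩
    refine ⟨{ toFun := fun u => ⟨H.toHomotopy.curry u, ?_, ?_⟩
              continuous_toFun := Continuous.subtype_mk H.toHomotopy.curry.continuous _
              source' := Subtype.ext ?_
              target' := Subtype.ext ?_ }⟩
    · rw [ContinuousMap.Homotopy.curry_apply, ContinuousMap.HomotopyWith.coe_toHomotopy,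
        H.eq_fst u (by simp), ℓ.2.1]
    · rw [ContinuousMap.Homotopy.curry_apply, ContinuousMap.HomotopyWith.coe_toHomotopy,
        H.eq_snd u (by simp), ℓ'.2.2]
    · ext t
      rw [ContinuousMap.Homotopy.curry_apply, ContinuousMap.HomotopyWith.coe_toHomotopy,
        H.apply_zero]
    · ext t
      rw [ContinuousMap.Homotopy.curry_apply, ContinuousMap.HomotopyWith.coe_toHomotopy,
        H.apply_one]

lemma homotopicRel_iff_path {f g : C(unitInterval, X)} {a b : X}
    (hf0 : f 0 = a) (hf1 : f 1 = b) (hg0 : g 0 = a) (hg1 : g 1 = b) :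
    ContinuousMap.HomotopicRel f g {0, 1} ↔ (toP f hf0 hf1).Homotopic (toP g hg0 hg1) :=
  Iff.rfl

end Bridges

section Core
variable {X : Type} [MetricSpace X] {p : X}

/-- The loop `f · (α|_{[0,s]})⁻¹` at `p`. -/
def backLoop (α : C(unitInterval, X)) (hα0 : α 0 = p) (f : PathSp X p) (s : unitInterval)
    (hf1 : f.1 1 = α s) : LoopSp X p :=
  ⟨transCM f.1 (revCM (res α s)) (by rw [revCM_at_zero, res_at_one]; exact hf1),
    by rw [transCM_at_zero]; exact f.2,
    by rw [transCM_at_one, revCM_at_one, res_at_zero]; exact hα0⟩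

/-- `f` as a path from `p` to `α s`. -/
def fPath (α : C(unitInterval, X)) (f : PathSp X p) (s : unitInterval)
    (hf1 : f.1 1 = α s) : Path p (α s) := toP f.1 f.2 hf1

/-- `α|_{[0,s]}` as a path from `p` to `α s`. -/
def aPath (α : C(unitInterval, X)) (hα0 : α 0 = p) (s : unitInterval) : Path p (α s) :=
  toP (res α s) ((res_at_zero α s).trans hα0) (res_at_one α s)

lemma backLoop_eq_path (α : C(unitInterval, X)) (hα0 : α 0 = p) (f : PathSp X p)
    (s : unitInterval) (hf1 : f.1 1 = α s) :
    (backLoop α hα0 f s hf1).1 =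
      ((fPath α f s hf1).trans (aPath α hα0 s).symm).toContinuousMap :=
  transCM_eq_path _ _ _ _ _ (fun _ => rfl) (fun _ => rfl)

lemma backLoop_joined (α : C(unitInterval, X)) (hα0 : α 0 = p) {f g : PathSp X p}
    {s : unitInterval} (hf1 : f.1 1 = α s) (hg1 : g.1 1 = α s)
    (hrel : ContinuousMap.HomotopicRel f.1 g.1 {0, 1}) :
    Joined (backLoop α hα0 f s hf1) (backLoop α hα0 g s hg1) := by
  rw [joined_iff_homotopicRel, backLoop_eq_path, backLoop_eq_path]
  have hFG : (fPath α f s hf1).Homotopic (fPath α g s hg1) :=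
    (homotopicRel_iff_path f.2 hf1 g.2 hg1).mp hrel
  exact Path.Homotopic.hcomp hFG (Path.Homotopic.refl (aPath α hα0 s).symm)

/-- The constant loop. -/
def cstL : LoopSp X p := ⟨ContinuousMap.const _ p, rfl, rfl⟩

lemma backLoop_cst_joined (α : C(unitInterval, X)) (hα0 : α 0 = p) :
    Joined (backLoop α hα0 (cstP p) 0 (hα0.symm : (cstP p).1 1 = α 0)) (cstL (p := p)) := by
  rw [joined_iff_homotopicRel]
  have e1 : (backLoop α hα0 (cstP p) 0 hα0.symm).1 =
      ((Path.refl p).trans (Path.refl p)).toContinuousMap := by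
    apply transCM_eq_path
    · intro t; rfl
    · intro t
      show p = revCM (res α 0) t
      rw [revCM_apply, res_apply, mulI_zero_left, hα0]
  rw [e1]
  have : ((Path.refl p).trans (Path.refl p)).Homotopic (Path.refl p) :=
    ⟨Path.Homotopy.transRefl (Path.refl p)⟩
  exact this

lemma eq_res_of_backLoop_trivial (α : C(unitInterval, X)) (hα0 : α 0 = p) {f : PathSp X p}
    {s : unitInterval} (hf1 : f.1 1 = α s)
    (h : Joined (backLoop α hα0 f s hf1) (cstL (p := p))) :
    pcMk f = pcMk ⟨res α s, (res_at_zero α s).trans hα0⟩ := by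
  apply pcMk_eq_iff.mpr
  have hrel := joined_iff_homotopicRel.mp h
  rw [backLoop_eq_path] at hrel
  have hP : ((fPath α f s hf1).trans (aPath α hα0 s).symm).Homotopic (Path.refl p) := hrel
  have := homotopic_of_trans_symm_nil _ _ hP
  exact this

/-- Key lemma: any path in `E` starting at the class of the constant path is the
standard lift of its endpoint path. -/
lemma stdLift_eq (htpd : IsTotallyPathDisconnected (TopPi1 X p))
    (Γ : C(unitInterval, PathClasses X p))
    (hΓ0 : Γ 0 = pcMk (cstP p))
    (α : C(unitInterval, X)) (hα : ∀ s, endMap X p (Γ s) = α s) (hα0 : α 0 = p) :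
    ∀ s, Γ s = pcMk ⟨res α s, (res_at_zero α s).trans hα0⟩ := by
  classical
  -- the closed saturated set `W`
  set W : Set (PathClasses X p × unitInterval) := {w | endMap X p w.1 = α w.2} with hW
  have hWclosed : IsClosed W :=
    isClosed_eq (continuous_endMap.comp continuous_fst) (α.continuous.comp continuous_snd)
  have hmk : IsQuotientMap (Prod.map (pcMk (X := X) (p := p)) (id : unitInterval → unitInterval)) :=
    myIsQuotientMap_prodMap_id isQuotientMap_pcMk
  set ρ := W.restrictPreimage (Prod.map (pcMk (X := X) (p := p)) id) with hρdef
  have hρ : IsQuotientMap ρ := myIsQuotientMap_restrictPreimage_isClosed hmk hWclosed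
  -- the lifted map
  have hend : ∀ z : (Prod.map (pcMk (X := X) (p := p)) id ⁻¹' W), (z.1.1.1 : C(unitInterval, X)) 1 = α z.1.2 :=
    fun z => z.2
  set Dtil : (Prod.map (pcMk (X := X) (p := p)) id ⁻¹' W) → TopPi1 X p :=
    fun z => TopPi1.mk (backLoop α hα0 z.1.1 z.1.2 (hend z)) with hDtil
  have hDtilcont : Continuous Dtil := by
    apply continuous_pi1Mk.comp
    apply Continuous.subtype_mk
    apply continuous_transCM
      (u := fun z : (Prod.map (pcMk (X := X) (p := p)) id ⁻¹' W) => (z.1.1.1 : C(unitInterval, X)))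
      (v := fun z : (Prod.map (pcMk (X := X) (p := p)) id ⁻¹' W) => revCM (res α z.1.2))
    · exact continuous_subtype_val.comp (continuous_fst.comp continuous_subtype_val)
    · exact continuous_revCM.comp ((resF α).continuous.comp
        (continuous_snd.comp continuous_subtype_val))
  -- descent
  have hdesc : ∀ z z', ρ z = ρ z' → Dtil z = Dtil z' := by
    rintro ⟨⟨f, s⟩, hz⟩ ⟨⟨g, s'⟩, hz'⟩ h
    have h1 : pcMk f = pcMk g := congrArg (fun w : W => (w.1).1) h
    have h2 : s = s' := congrArg (fun w : W => (w.1).2) h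
    subst h2
    exact pi1Mk_eq_iff.mpr (backLoop_joined α hα0 _ _ (pcMk_eq_iff.mp h1))
  set Dbar : W → TopPi1 X p := fun w => Dtil (Function.surjInv hρ.surjective w) with hDbar
  have hDcomp : ∀ z, Dbar (ρ z) = Dtil z :=
    fun z => hdesc _ z (Function.surjInv_eq hρ.surjective (ρ z))
  have hDbarcont : Continuous Dbar := by
    rw [hρ.continuous_iff]
    have : Dbar ∘ ρ = Dtil := funext hDcomp
    rw [this]
    exact hDtilcont
  -- the path `D`
  set D : unitInterval → TopPi1 X p := fun s => Dbar ⟨(Γ s, s), hα s⟩ with hD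
  have hDcont : Continuous D :=
    hDbarcont.comp (Continuous.subtype_mk ((map_continuous Γ).prodMk continuous_id) _)
  -- `D` takes values in a single path component
  have htriv : ∀ s, D s = D 0 := by
    intro s
    refine (htpd (D 0) (D s) ?_).symm
    have pth : Path (0 : unitInterval) s :=
      { toFun := fun u => mulI (s, u)
        continuous_toFun := (map_continuous mulI).comp (continuous_const.prodMk continuous_id)
        source' := mulI_zero_right s
        target' := mulI_one_right s }
    exact ⟨pth.map hDcont⟩
  -- computing `D` at a representative
  have hDval : ∀ (s : unitInterval) (f : PathSp X p) (hf : pcMk f = Γ s),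
      D s = TopPi1.mk (backLoop α hα0 f s
        (by rw [← endMap_mk f, hf, hα s] : f.1 1 = α s)) := by
    intro s f hf
    have hmem : (f, s) ∈ (Prod.map (pcMk (X := X) (p := p)) id ⁻¹' W) := by
      show endMap X p (pcMk f) = α s
      rw [endMap_mk, ← endMap_mk f, hf, hα s]
    have : ρ ⟨(f, s), hmem⟩ = ⟨(Γ s, s), hα s⟩ := by
      apply Subtype.ext
      show (pcMk f, s) = (Γ s, s)
      rw [hf]
    calc D s = Dbar (ρ ⟨(f, s), hmem⟩) := by rw [this]
    _ = Dtil ⟨(f, s), hmem⟩ := hDcomp _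
    _ = _ := rfl
  -- conclusion
  intro s
  set f : PathSp X p := @Quotient.out _ (pathHomSetoid X p) (Γ s) with hfdef
  have hf : pcMk f = Γ s := Quotient.out_eq _
  have hf1 : f.1 1 = α s := by rw [← endMap_mk f, hf, hα s]
  have hcst : pcMk (cstP p) = Γ 0 := hΓ0.symm
  have e0 : D 0 = TopPi1.mk (backLoop α hα0 (cstP p) 0
      (by rw [← endMap_mk (cstP p), hcst, hα 0] : (cstP p).1 1 = α 0)) := hDval 0 (cstP p) hcst
  have es : D s = TopPi1.mk (backLoop α hα0 f s
      (by rw [← endMap_mk f, hf, hα s] : f.1 1 = α s)) := hDval s f hf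
  have etriv : TopPi1.mk (backLoop α hα0 (cstP p) 0 _) = TopPi1.mk (cstL (p := p)) :=
    pi1Mk_eq_iff.mpr (backLoop_cst_joined α hα0)
  have : TopPi1.mk (backLoop α hα0 f s hf1) = TopPi1.mk (cstL (p := p)) := by
    rw [← es, htriv s, e0]
    exact etriv
  have hj : Joined (backLoop α hα0 f s hf1) (cstL (p := p)) := pi1Mk_eq_iff.mp this
  rw [← hf]
  exact eq_res_of_backLoop_trivial α hα0 hf1 hj

end Core

section Final
variable {X : Type} [MetricSpace X] {p : X}

lemma joined_base (e : PathClasses X p) : Joined (pcMk (cstP p)) e := by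
  obtain ⟨f, rfl⟩ := Quotient.exists_rep e
  refine ⟨{ toFun := fun s => pcMk ⟨res f.1 s, (res_at_zero f.1 s).trans f.2⟩
            continuous_toFun := ?_
            source' := ?_
            target' := ?_ }⟩
  · exact continuous_pcMk.comp (Continuous.subtype_mk (resF f.1).continuous _)
  · apply congrArg pcMk
    apply Subtype.ext
    show res f.1 0 = ContinuousMap.const _ p
    rw [res_zero, f.2]
  · apply congrArg pcMk
    apply Subtype.ext
    show res f.1 1 = f.1
    rw [res_one]

end Final

end Stmt11Aux

/-- If `X` is a path-connected metric space, `p ∈ X`, and `π₁(X,p)` is totally path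
disconnected, then the total space `E` of path-homotopy classes of paths starting at
`p` is simply connected: `E` is path connected and every loop in `E` based at the
class `[P]` of the constant path at `p` is null-homotopic. -/
theorem stmt11 (X : Type) [MetricSpace X] [PathConnectedSpace X] (p : X)
    (htpd : IsTotallyPathDisconnected (TopPi1 X p)) :
    PathConnectedSpace (PathClasses X p) ∧
      ∀ γ : LoopSp (PathClasses X p)
          (Quotient.mk (pathHomSetoid X p) ⟨ContinuousMap.const _ p, rfl⟩),
        TopPi1.mk γ =
          TopPi1.mk (⟨ContinuousMap.const _
                (Quotient.mk (pathHomSetoid X p) ⟨ContinuousMap.const _ p, rfl⟩), rfl, rfl⟩ :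
              LoopSp (PathClasses X p)
                (Quotient.mk (pathHomSetoid X p) ⟨ContinuousMap.const _ p, rfl⟩)) := by
  constructor
  · exact ⟨⟨pcMk (cstP p)⟩, fun x y => (joined_base x).symm.trans (joined_base y)⟩
  · intro γ
    set Γ : C(unitInterval, PathClasses X p) := γ.1 with hΓdef
    have hΓ0 : Γ 0 = pcMk (cstP p) := γ.2.1
    have hΓ1 : Γ 1 = pcMk (cstP p) := γ.2.2
    set α : C(unitInterval, X) :=
      ⟨fun s => endMap X p (Γ s), continuous_endMap.comp (map_continuous Γ)⟩ with hαdef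
    have hαs : ∀ s, endMap X p (Γ s) = α s := fun s => rfl
    have hα0 : α 0 = p := by show endMap X p (Γ 0) = p; rw [hΓ0]; rfl
    have hα1 : α 1 = p := by show endMap X p (Γ 1) = p; rw [hΓ1]; rfl
    have hs := stdLift_eq htpd Γ hΓ0 α hαs hα0
    have hres1 : (⟨res α 1, (res_at_zero α 1).trans hα0⟩ : PathSp X p) = ⟨α, hα0⟩ :=
      Subtype.ext (res_one α)
    have hαcls : pcMk (⟨α, hα0⟩ : PathSp X p) = pcMk (cstP p) := by
      rw [← hres1, ← hs 1, hΓ1]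
    obtain ⟨K⟩ := pcMk_eq_iff.mp hαcls
    -- `K : HomotopyRel α (const p) {0,1}`
    have hK0 : ∀ u : unitInterval, K.toHomotopy (u, 0) = p := fun u => by
      have := K.eq_fst u (show (0 : unitInterval) ∈ ({0, 1} : Set unitInterval) by simp)
      rw [ContinuousMap.HomotopyWith.coe_toHomotopy, this]
      exact hα0
    have hK1 : ∀ u : unitInterval, K.toHomotopy (u, 1) = p := fun u => by
      have := K.eq_fst u (show (1 : unitInterval) ∈ ({0, 1} : Set unitInterval) by simp)
      rw [ContinuousMap.HomotopyWith.coe_toHomotopy, this]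
      exact hα1
    -- the path of terminal loop classes
    have hK0' : ∀ u, (K.toHomotopy.curry u) 0 = p := fun u => by
      rw [ContinuousMap.Homotopy.curry_apply]; exact hK0 u
    set τ : C(unitInterval, PathClasses X p) :=
      ⟨fun u => pcMk ⟨K.toHomotopy.curry u, hK0' u⟩,
        continuous_pcMk.comp
          (Continuous.subtype_mk (map_continuous K.toHomotopy.curry) hK0')⟩ with hτdef
    have hτ0 : τ 0 = pcMk (cstP p) := by
      show pcMk _ = pcMk (cstP p)
      rw [← hαcls]
      apply congrArg pcMk
      apply Subtype.ext
      show K.toHomotopy.curry 0 = α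
      ext t
      rw [ContinuousMap.Homotopy.curry_apply, ContinuousMap.Homotopy.apply_zero]
    have hτα : ∀ u, endMap X p (τ u) = (ContinuousMap.const unitInterval p) u := fun u => by
      show endMap X p (pcMk _) = p
      show K.toHomotopy.curry u 1 = p
      rw [ContinuousMap.Homotopy.curry_apply]
      exact hK1 u
    have hτP : ∀ u, τ u = pcMk (cstP p) := fun u => by
      rw [stdLift_eq htpd τ hτ0 (ContinuousMap.const _ p) hτα rfl u]
      apply congrArg pcMk
      apply Subtype.ext
      show res (ContinuousMap.const _ p) u = ContinuousMap.const _ p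
      ext t
      rfl
    -- the contraction of `γ`
    set KC : C(unitInterval × unitInterval, X) := K.toHomotopy.toContinuousMap with hKCdef
    set m0 : C((unitInterval × unitInterval) × unitInterval, X) :=
      KC.comp ⟨fun q => (q.1.1, mulI (q.1.2, q.2)),
        (continuous_fst.comp continuous_fst).prodMk
          ((map_continuous mulI).comp
            ((continuous_snd.comp continuous_fst).prodMk continuous_snd))⟩ with hm0def
    set m1 : C(unitInterval × unitInterval, C(unitInterval, X)) := m0.curry with hm1def
    have hm1val : ∀ (u s t : unitInterval), m1 (u, s) t = KC (u, mulI (s, t)) := fun u s t => rfl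
    have hm10 : ∀ q : unitInterval × unitInterval, m1 q 0 = p := fun q => by
      rw [hm1val q.1 q.2 0, mulI_zero_right]
      exact hK0 q.1
    set m2 : C(unitInterval × unitInterval, PathClasses X p) :=
      ⟨fun q => pcMk ⟨m1 q, hm10 q⟩,
        continuous_pcMk.comp (Continuous.subtype_mk (map_continuous m1) _)⟩ with hm2def
    set m5 : C(unitInterval, C(unitInterval, PathClasses X p)) := m2.curry with hm5def
    have hm5val : ∀ u s, m5 u s = pcMk ⟨m1 (u, s), hm10 (u, s)⟩ := fun u s => rfl
    have hm5at0 : ∀ u, m5 u 0 = pcMk (cstP p) := fun u => by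
      rw [hm5val u 0]
      apply congrArg pcMk
      apply Subtype.ext
      show m1 (u, 0) = ContinuousMap.const _ p
      ext t
      rw [hm1val u 0 t, mulI_zero_left]
      show KC (u, 0) = p
      exact hK0 u
    have hm5at1 : ∀ u, m5 u 1 = pcMk (cstP p) := fun u => by
      rw [hm5val u 1, ← hτP u]
      apply congrArg pcMk
      apply Subtype.ext
      show m1 (u, 1) = K.toHomotopy.curry u
      ext t
      rw [hm1val u 1 t, mulI_one_left, ContinuousMap.Homotopy.curry_apply]
      rfl
    apply pi1Mk_eq_iff.mpr
    show @Joined (LoopSp (PathClasses X p) (pcMk (cstP p))) _ γ _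
    refine ⟨{ toFun := fun u => ⟨m5 u, hm5at0 u, hm5at1 u⟩
              continuous_toFun := Continuous.subtype_mk (map_continuous m5) _
              source' := Subtype.ext ?_
              target' := Subtype.ext ?_ }⟩
    · show m5 0 = Γ
      ext s
      rw [hm5val 0 s, hs s]
      apply congrArg pcMk
      apply Subtype.ext
      show m1 (0, s) = res α s
      ext t
      rw [hm1val 0 s t]
      show K.toHomotopy (0, mulI (s, t)) = res α s t
      rw [ContinuousMap.Homotopy.apply_zero]
      rfl
    · show m5 1 = ContinuousMap.const _ (pcMk (cstP p))
      ext s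
      rw [hm5val 1 s]
      show pcMk _ = pcMk (cstP p)
      apply congrArg pcMk
      apply Subtype.ext
      show m1 (1, s) = ContinuousMap.const _ p
      ext t
      rw [hm1val 1 s t]
      show K.toHomotopy (1, mulI (s, t)) = p
      rw [ContinuousMap.Homotopy.apply_one]
      rfl
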